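/- Let (Ω, F, P) be a probability space with a filtration (F_t)_{t ∈ [0,T]}, and let (𝓔_{s,t})_{0 ≤ s ≤ t ≤ T} be an F-evaluation. Let 0 = t_0 < t_1 < ⋯ < t_N = T be a partition of [0, T], let ξ_i ∈ L²(Ω, F_{t_i}, P) for i = 0, …, N−1, and let K be the step process K_s = Σ_{i=0}^{N−1} ξ_i · 1_{[t_i, t_{i+1})}(s) for s ∈ [0, T]. Then there exists a unique F-evaluation (𝓔_{s,t}[·; K])_{0 ≤ s ≤ t ≤ T} such that for every i ∈ {0, …, N−1}, every s, t with t_i ≤ s ≤ t ≤ t_{i+1}, and every X ∈ L²(Ω, F_t, P): 𝓔_{s,t}[X; K] = 𝓔_{s,t}[X + K_t − K_s] almost surely. -/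

import Mathlib

open MeasureTheory

/-- A filtration-consistent nonlinear evaluation (`F`-evaluation) on the time interval
`[0, T]`, acting on square-integrable random variables (Definition 3.1 of the paper).
The operator `eval s t` sends an `F t`-measurable square-integrable variable to an
`F s`-measurable square-integrable one, and satisfies monotonicity, `𝓔_{t,t}[ξ] = ξ`,
time consistency, and the zero-one law `1_A 𝓔_{s,t}[ξ] = 1_A 𝓔_{s,t}[1_A ξ]`. -/
structure FEvaluation {Ω : Type*} [m0 : MeasurableSpace Ω] (P : Measure Ω) (T : ℝ)
    (F : Filtration ℝ m0) where
  eval : ℝ → ℝ → (Ω → ℝ) → Ω → ℝ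
  measurable_eval : ∀ s t ξ, 0 ≤ s → s ≤ t → t ≤ T →
    AEStronglyMeasurable[F t] ξ P → MemLp ξ 2 P →
    AEStronglyMeasurable[F s] (eval s t ξ) P
  memL2_eval : ∀ s t ξ, 0 ≤ s → s ≤ t → t ≤ T →
    AEStronglyMeasurable[F t] ξ P → MemLp ξ 2 P → MemLp (eval s t ξ) 2 P
  mono : ∀ s t ξ η, 0 ≤ s → s ≤ t → t ≤ T →
    AEStronglyMeasurable[F t] ξ P → MemLp ξ 2 P →
    AEStronglyMeasurable[F t] η P → MemLp η 2 P →
    (∀ᵐ ω ∂P, η ω ≤ ξ ω) → ∀ᵐ ω ∂P, eval s t η ω ≤ eval s t ξ ω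
  eval_self : ∀ t ξ, 0 ≤ t → t ≤ T →
    AEStronglyMeasurable[F t] ξ P → MemLp ξ 2 P → eval t t ξ =ᵐ[P] ξ
  consistent : ∀ r s t ξ, 0 ≤ r → r ≤ s → s ≤ t → t ≤ T →
    AEStronglyMeasurable[F t] ξ P → MemLp ξ 2 P →
    eval r s (eval s t ξ) =ᵐ[P] eval r t ξ
  zero_one : ∀ s t ξ (A : Set Ω), 0 ≤ s → s ≤ t → t ≤ T →
    AEStronglyMeasurable[F t] ξ P → MemLp ξ 2 P → MeasurableSet[F s] A →
    ∀ᵐ ω ∂P, ω ∈ A → eval s t ξ ω = eval s t (A.indicator ξ) ω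

/-- The step process `K_s = Σ_{i=0}^{N-1} ξ_i 1_{[t_i, t_{i+1})}(s)`. -/
noncomputable def stepProcess {Ω : Type*} (N : ℕ) (t : Fin (N + 1) → ℝ) (ξ : Fin N → Ω → ℝ)
    (s : ℝ) (ω : Ω) : ℝ :=
  ∑ i : Fin N, if t i.castSucc ≤ s ∧ s < t i.succ then ξ i ω else 0

/-- The evaluation `E'` agrees with `X ↦ E[X + K_t − K_s]` on each subinterval of the
partition (property (3.1) of Proposition 3.5 of the paper). -/
def ShiftProperty {Ω : Type*} [m0 : MeasurableSpace Ω] {P : Measure Ω} {T : ℝ}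
    {F : Filtration ℝ m0} (E E' : FEvaluation P T F)
    (N : ℕ) (t : Fin (N + 1) → ℝ) (ξ : Fin N → Ω → ℝ) : Prop :=
  ∀ (i : Fin N) (s u : ℝ), t i.castSucc ≤ s → s ≤ u → u ≤ t i.succ →
    ∀ X : Ω → ℝ, AEStronglyMeasurable[F u] X P → MemLp X 2 P →
      E'.eval s u X =ᵐ[P]
        E.eval s u (fun ω => X ω + stepProcess N t ξ u ω - stepProcess N t ξ s ω)


set_option linter.unusedSectionVars false

section Aux

variable {Ω : Type*} [m0 : MeasurableSpace Ω] {P : Measure Ω} {T : ℝ} {F : Filtration ℝ m0}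

/-- Bundle of the standing hypotheses on the partition and the step heights. -/
structure StepSetup (P : Measure Ω) (T : ℝ) (F : Filtration ℝ m0) (N : ℕ)
    (t : Fin (N + 1) → ℝ) (ξ : Fin N → Ω → ℝ) : Prop where
  hN : 0 < N
  hmono : StrictMono t
  ht0 : t 0 = 0
  htN : t (Fin.last N) = T
  hξm : ∀ i : Fin N, AEStronglyMeasurable[F (t i.castSucc)] (ξ i) P
  hξ2 : ∀ i : Fin N, MemLp (ξ i) 2 P

theorem FEvaluation.evalCongr (E : FEvaluation P T F) {s u : ℝ} (hs : 0 ≤ s) (hsu : s ≤ u)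
    (huT : u ≤ T) {X Y : Ω → ℝ} (hXm : AEStronglyMeasurable[F u] X P) (hX2 : MemLp X 2 P)
    (hYm : AEStronglyMeasurable[F u] Y P) (hY2 : MemLp Y 2 P) (h : X =ᵐ[P] Y) :
    E.eval s u X =ᵐ[P] E.eval s u Y := by
  have h1 := E.mono s u X Y hs hsu huT hXm hX2 hYm hY2 h.symm.le
  have h2 := E.mono s u Y X hs hsu huT hYm hY2 hXm hX2 h.le
  exact Filter.EventuallyLE.antisymm h2 h1

/-- `tau n = t (min n N)`, an `ℕ`-indexed version of the partition points. -/
noncomputable def tau (N : ℕ) (t : Fin (N + 1) → ℝ) (n : ℕ) : ℝ :=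
  t ⟨min n N, Nat.lt_succ_of_le (min_le_right n N)⟩

theorem tau_eq {N : ℕ} (t : Fin (N + 1) → ℝ) {n : ℕ} (h : n ≤ N) :
    tau N t n = t ⟨n, Nat.lt_succ_of_le h⟩ := by
  unfold tau; congr 1; exact Fin.ext (by simpa using min_eq_left h)

theorem tau_mono {N : ℕ} {t : Fin (N + 1) → ℝ} (hmono : StrictMono t) : Monotone (tau N t) :=
  fun n m h => hmono.monotone (by simp only [Fin.mk_le_mk]; omega)

theorem tau_zero {N : ℕ} {t : Fin (N + 1) → ℝ} (ht0 : t 0 = 0) : tau N t 0 = 0 := by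
  rw [tau_eq t (Nat.zero_le N)]
  exact (congrArg t (Fin.ext rfl)).trans ht0

theorem tau_ge {N : ℕ} {t : Fin (N + 1) → ℝ} (htN : t (Fin.last N) = T) {n : ℕ} (h : N ≤ n) :
    tau N t n = T := by
  unfold tau
  rw [← htN]
  congr 1
  exact Fin.ext (by simpa using min_eq_right h)

theorem tau_nonneg {N : ℕ} {t : Fin (N + 1) → ℝ} (hmono : StrictMono t) (ht0 : t 0 = 0) (n : ℕ) :
    0 ≤ tau N t n := by
  have := tau_mono hmono (Nat.zero_le n)
  rwa [tau_zero ht0] at this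

theorem tau_le_T {N : ℕ} {t : Fin (N + 1) → ℝ} (hmono : StrictMono t)
    (htN : t (Fin.last N) = T) (n : ℕ) : tau N t n ≤ T := by
  rcases le_total N n with h | h
  · exact (tau_ge htN h).le
  · rw [← tau_ge (T := T) htN (le_refl N)]
    exact tau_mono hmono h

theorem stepProcess_eq {N : ℕ} {t : Fin (N + 1) → ℝ} {ξ : Fin N → Ω → ℝ}
    (hmono : StrictMono t) (i : Fin N) {s : ℝ} (h1 : t i.castSucc ≤ s) (h2 : s < t i.succ) :
    stepProcess N t ξ s = ξ i := by
  funext ω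
  unfold stepProcess
  rw [Finset.sum_eq_single i]
  · rw [if_pos ⟨h1, h2⟩]
  · intro j _ hj
    rw [if_neg]
    rintro ⟨hj1, hj2⟩
    rcases lt_or_gt_of_ne hj with h | h
    · have : t j.succ ≤ t i.castSucc := hmono.monotone (by
        simp only [Fin.le_def, Fin.val_succ, Fin.coe_castSucc]
        exact Fin.lt_def.mp h)
      linarith
    · have : t i.succ ≤ t j.castSucc := hmono.monotone (by
        simp only [Fin.le_def, Fin.val_succ, Fin.coe_castSucc]
        exact Fin.lt_def.mp h)
      linarith
  · intro h; exact absurd (Finset.mem_univ i) h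

theorem stepProcess_of_ge {N : ℕ} {t : Fin (N + 1) → ℝ} {ξ : Fin N → Ω → ℝ}
    (hmono : StrictMono t) (htN : t (Fin.last N) = T) {s : ℝ} (h : T ≤ s) :
    stepProcess N t ξ s = fun _ => 0 := by
  funext ω
  unfold stepProcess
  rw [Finset.sum_eq_zero]
  intro i _
  rw [if_neg]
  rintro ⟨-, h2⟩
  have : t i.succ ≤ T := by rw [← htN]; exact hmono.monotone (Fin.le_last _)
  linarith

theorem exists_cell {N : ℕ} {t : Fin (N + 1) → ℝ} (hN : 0 < N) (hmono : StrictMono t)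
    (ht0 : t 0 = 0) (htN : t (Fin.last N) = T) {s : ℝ} (h0 : 0 ≤ s) (hsT : s < T) :
    ∃ i : Fin N, t i.castSucc ≤ s ∧ s < t i.succ := by
  classical
  set m := Nat.findGreatest (fun n => tau N t n ≤ s) (N - 1) with hm
  have hm_le : m ≤ N - 1 := Nat.findGreatest_le _
  have hP0 : tau N t 0 ≤ s := by rw [tau_zero ht0]; exact h0
  have hPm : tau N t m ≤ s := by
    have := Nat.findGreatest_spec (P := fun n => tau N t n ≤ s) (Nat.zero_le (N-1)) hP0
    rwa [← hm] at this
  refine ⟨⟨m, by omega⟩, ?_, ?_⟩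
  · rw [tau_eq t (by omega : m ≤ N)] at hPm
    rw [Fin.castSucc_mk]
    exact hPm
  · rw [Fin.succ_mk]
    by_cases hmN : m = N - 1
    · have : (⟨m + 1, by omega⟩ : Fin (N + 1)) = Fin.last N := Fin.ext (by simp; omega)
      rw [this, htN]
      exact hsT
    · have hnot : ¬ tau N t (m + 1) ≤ s :=
        Nat.findGreatest_is_greatest (Nat.lt_succ_self m) (by omega)
      rw [tau_eq t (by omega : m + 1 ≤ N)] at hnot
      exact lt_of_not_ge hnot

theorem stepProcess_props {N : ℕ} {t : Fin (N + 1) → ℝ} {ξ : Fin N → Ω → ℝ}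
    (S : StepSetup P T F N t ξ) {s : ℝ} (h0 : 0 ≤ s) (hsT : s ≤ T) :
    AEStronglyMeasurable[F s] (stepProcess N t ξ s) P ∧ MemLp (stepProcess N t ξ s) 2 P := by
  rcases eq_or_lt_of_le hsT with h | h
  · rw [stepProcess_of_ge S.hmono S.htN h.ge]
    exact ⟨(@stronglyMeasurable_const Ω ℝ (F s) _ 0).aestronglyMeasurable, MemLp.zero'⟩
  · obtain ⟨i, h1, h2⟩ := exists_cell S.hN S.hmono S.ht0 S.htN h0 h
    rw [stepProcess_eq S.hmono i h1 h2]
    exact ⟨(S.hξm i).mono (F.mono h1), S.hξ2 i⟩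

end Aux

section Aux2

variable {Ω : Type*} [m0 : MeasurableSpace Ω] {P : Measure Ω} {T : ℝ} {F : Filtration ℝ m0}
  {N : ℕ} {t : Fin (N + 1) → ℝ} {ξ : Fin N → Ω → ℝ}

set_option linter.unusedSectionVars false

/-- The one-cell shifted evaluation `D_{a,b} X = 𝓔_{a,b}[X + K_b - K_a]`. -/
noncomputable def Dop (E : FEvaluation P T F) (N : ℕ) (t : Fin (N + 1) → ℝ)
    (ξ : Fin N → Ω → ℝ) (a b : ℝ) (X : Ω → ℝ) : Ω → ℝ :=
  E.eval a b (fun ω => X ω + stepProcess N t ξ b ω - stepProcess N t ξ a ω)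

theorem inner_props (S : StepSetup P T F N t ξ) {a b : ℝ} (h0 : 0 ≤ a) (hab : a ≤ b)
    (hbT : b ≤ T) {X : Ω → ℝ} (hXm : AEStronglyMeasurable[F b] X P) (hX2 : MemLp X 2 P) :
    AEStronglyMeasurable[F b]
      (fun ω => X ω + stepProcess N t ξ b ω - stepProcess N t ξ a ω) P ∧
    MemLp (fun ω => X ω + stepProcess N t ξ b ω - stepProcess N t ξ a ω) 2 P := by
  have hKb := stepProcess_props S (h0.trans hab) hbT
  have hKa := stepProcess_props S h0 (hab.trans hbT)
  exact ⟨(hXm.add hKb.1).sub (hKa.1.mono (F.mono hab)), (hX2.add hKb.2).sub hKa.2⟩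

theorem Dop_meas (E : FEvaluation P T F) (S : StepSetup P T F N t ξ) {a b : ℝ} (h0 : 0 ≤ a)
    (hab : a ≤ b) (hbT : b ≤ T) {X : Ω → ℝ} (hXm : AEStronglyMeasurable[F b] X P)
    (hX2 : MemLp X 2 P) : AEStronglyMeasurable[F a] (Dop E N t ξ a b X) P :=
  E.measurable_eval a b _ h0 hab hbT (inner_props S h0 hab hbT hXm hX2).1
    (inner_props S h0 hab hbT hXm hX2).2

theorem Dop_memL2 (E : FEvaluation P T F) (S : StepSetup P T F N t ξ) {a b : ℝ} (h0 : 0 ≤ a)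
    (hab : a ≤ b) (hbT : b ≤ T) {X : Ω → ℝ} (hXm : AEStronglyMeasurable[F b] X P)
    (hX2 : MemLp X 2 P) : MemLp (Dop E N t ξ a b X) 2 P :=
  E.memL2_eval a b _ h0 hab hbT (inner_props S h0 hab hbT hXm hX2).1
    (inner_props S h0 hab hbT hXm hX2).2

theorem Dop_congr (E : FEvaluation P T F) (S : StepSetup P T F N t ξ) {a b : ℝ} (h0 : 0 ≤ a)
    (hab : a ≤ b) (hbT : b ≤ T) {X Y : Ω → ℝ} (hXm : AEStronglyMeasurable[F b] X P)
    (hX2 : MemLp X 2 P) (hYm : AEStronglyMeasurable[F b] Y P) (hY2 : MemLp Y 2 P)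
    (h : X =ᵐ[P] Y) : Dop E N t ξ a b X =ᵐ[P] Dop E N t ξ a b Y :=
  E.evalCongr h0 hab hbT (inner_props S h0 hab hbT hXm hX2).1 (inner_props S h0 hab hbT hXm hX2).2
    (inner_props S h0 hab hbT hYm hY2).1 (inner_props S h0 hab hbT hYm hY2).2
    (h.mono fun ω hω => by beta_reduce; rw [hω])

theorem Dop_mono (E : FEvaluation P T F) (S : StepSetup P T F N t ξ) {a b : ℝ} (h0 : 0 ≤ a)
    (hab : a ≤ b) (hbT : b ≤ T) {X Y : Ω → ℝ} (hXm : AEStronglyMeasurable[F b] X P)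
    (hX2 : MemLp X 2 P) (hYm : AEStronglyMeasurable[F b] Y P) (hY2 : MemLp Y 2 P)
    (h : ∀ᵐ ω ∂P, Y ω ≤ X ω) : ∀ᵐ ω ∂P, Dop E N t ξ a b Y ω ≤ Dop E N t ξ a b X ω :=
  E.mono a b _ _ h0 hab hbT (inner_props S h0 hab hbT hXm hX2).1
    (inner_props S h0 hab hbT hXm hX2).2
    (inner_props S h0 hab hbT hYm hY2).1 (inner_props S h0 hab hbT hYm hY2).2
    (h.mono fun ω hω => by beta_reduce; linarith)

theorem Dop_self (E : FEvaluation P T F) (S : StepSetup P T F N t ξ) {a : ℝ} (h0 : 0 ≤ a)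
    (haT : a ≤ T) {X : Ω → ℝ} (hXm : AEStronglyMeasurable[F a] X P) (hX2 : MemLp X 2 P) :
    Dop E N t ξ a a X =ᵐ[P] X := by
  have e : (fun ω => X ω + stepProcess N t ξ a ω - stepProcess N t ξ a ω) = X :=
    funext fun ω => by ring
  unfold Dop
  rw [e]
  exact E.eval_self a X h0 haT hXm hX2

theorem Dop_cell (E : FEvaluation P T F) (S : StepSetup P T F N t ξ) (i : Fin N) {a b c : ℝ}
    (h1 : t i.castSucc ≤ a) (hab : a ≤ b) (hbc : b ≤ c) (h2 : c ≤ t i.succ) {Y : Ω → ℝ}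
    (hYm : AEStronglyMeasurable[F c] Y P) (hY2 : MemLp Y 2 P) :
    Dop E N t ξ a b (Dop E N t ξ b c Y) =ᵐ[P] Dop E N t ξ a c Y := by
  have h0a : 0 ≤ a := le_trans (by rw [← S.ht0]; exact S.hmono.monotone (Fin.zero_le _)) h1
  have hcT : c ≤ T := le_trans h2 (by rw [← S.htN]; exact S.hmono.monotone (Fin.le_last _))
  rcases eq_or_lt_of_le hbc with he | hlt
  · subst he
    have hYm' : AEStronglyMeasurable[F b] Y P := hYm
    refine (Dop_congr E S h0a hab (hbc.trans hcT) ?_ ?_ hYm' hY2 ?_)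
    · exact Dop_meas E S (h0a.trans hab) le_rfl (hbc.trans hcT) hYm' hY2
    · exact Dop_memL2 E S (h0a.trans hab) le_rfl (hbc.trans hcT) hYm' hY2
    · exact Dop_self E S (h0a.trans hab) (hbc.trans hcT) hYm' hY2
  · have hKa : stepProcess N t ξ a = ξ i :=
      stepProcess_eq S.hmono i h1 (lt_of_le_of_lt hab (lt_of_lt_of_le hlt h2))
    have hKb : stepProcess N t ξ b = ξ i :=
      stepProcess_eq S.hmono i (h1.trans hab) (lt_of_lt_of_le hlt h2)
    have hinner := inner_props S (h0a.trans hab) hbc hcT hYm hY2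
    have e1 : (fun ω => Dop E N t ξ b c Y ω + stepProcess N t ξ b ω - stepProcess N t ξ a ω)
        = Dop E N t ξ b c Y := by
      funext ω; rw [hKa, hKb]; ring
    show E.eval a b _ =ᵐ[P] _
    rw [e1]
    refine (E.consistent a b c _ h0a hab hbc hcT hinner.1 hinner.2).trans ?_
    have e2 : (fun ω => Y ω + stepProcess N t ξ c ω - stepProcess N t ξ b ω)
        = (fun ω => Y ω + stepProcess N t ξ c ω - stepProcess N t ξ a ω) := by
      rw [hKa, hKb]
    unfold Dop
    rw [e2]

end Aux2

section Aux3

variable {Ω : Type*} [m0 : MeasurableSpace Ω] {P : Measure Ω} {T : ℝ} {F : Filtration ℝ m0}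
  {N : ℕ} {t : Fin (N + 1) → ℝ} {ξ : Fin N → Ω → ℝ}

set_option linter.unusedSectionVars false

/-- Composition of the one-cell shifted evaluations through the partition points
`q (N-k), …, q N`. -/
noncomputable def chain (E : FEvaluation P T F) (N : ℕ) (t : Fin (N + 1) → ℝ)
    (ξ : Fin N → Ω → ℝ) (q : ℕ → ℝ) : ℕ → (Ω → ℝ) → Ω → ℝ
  | 0, X => X
  | (k + 1), X => Dop E N t ξ (q (N - (k + 1))) (q (N - k)) (chain E N t ξ q k X)

theorem chain_props (E : FEvaluation P T F) (S : StepSetup P T F N t ξ) {q : ℕ → ℝ}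
    (hq : Monotone q) (hq0 : 0 ≤ q 0) (hqN : q N ≤ T) {X : Ω → ℝ}
    (hXm : AEStronglyMeasurable[F (q N)] X P) (hX2 : MemLp X 2 P) :
    ∀ k, k ≤ N → AEStronglyMeasurable[F (q (N - k))] (chain E N t ξ q k X) P ∧
      MemLp (chain E N t ξ q k X) 2 P := by
  intro k
  induction k with
  | zero => intro _; exact ⟨hXm, hX2⟩
  | succ k ih =>
    intro hk
    obtain ⟨ihm, ih2⟩ := ih (by omega)
    have h0 : 0 ≤ q (N - (k + 1)) := hq0.trans (hq (Nat.zero_le _))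
    have hab : q (N - (k + 1)) ≤ q (N - k) := hq (by omega)
    have hbT : q (N - k) ≤ T := (hq (by omega : N - k ≤ N)).trans hqN
    exact ⟨Dop_meas E S h0 hab hbT ihm ih2, Dop_memL2 E S h0 hab hbT ihm ih2⟩

theorem chain_congr (E : FEvaluation P T F) (S : StepSetup P T F N t ξ) {q q' : ℕ → ℝ}
    (hq : Monotone q) (hq0 : 0 ≤ q 0) (hqN : q N ≤ T)
    (hq' : Monotone q') (hq'0 : 0 ≤ q' 0) (hq'N : q' N ≤ T) {X X' : Ω → ℝ}
    (hXm : AEStronglyMeasurable[F (q N)] X P) (hX2 : MemLp X 2 P)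
    (hX'm : AEStronglyMeasurable[F (q' N)] X' P) (hX'2 : MemLp X' 2 P) {k : ℕ} :
    ∀ j, k ≤ j → j ≤ N → (∀ n, N - j ≤ n → n ≤ N - k → q n = q' n) →
      chain E N t ξ q k X =ᵐ[P] chain E N t ξ q' k X' →
      chain E N t ξ q j X =ᵐ[P] chain E N t ξ q' j X' := by
  intro j hkj hjN hagree hbase
  induction j, hkj using Nat.le_induction with
  | base => exact hbase
  | succ j hkj ih =>
    have hjN' : j ≤ N := by omega
    have ihe := ih hjN' (fun n h1 h2 => hagree n (by omega) h2)
    have hqq1 : q (N - (j + 1)) = q' (N - (j + 1)) := hagree _ le_rfl (by omega)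
    have hqq2 : q (N - j) = q' (N - j) := hagree _ (by omega) (by omega)
    have h0 : 0 ≤ q' (N - (j + 1)) := hq'0.trans (hq' (Nat.zero_le _))
    have hab : q' (N - (j + 1)) ≤ q' (N - j) := hq' (by omega)
    have hbT : q' (N - j) ≤ T := (hq' (by omega : N - j ≤ N)).trans hq'N
    have hm1 := (chain_props E S hq hq0 hqN hXm hX2 j hjN').1
    have h21 := (chain_props E S hq hq0 hqN hXm hX2 j hjN').2
    have hm2 := (chain_props E S hq' hq'0 hq'N hX'm hX'2 j hjN').1
    have h22 := (chain_props E S hq' hq'0 hq'N hX'm hX'2 j hjN').2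
    rw [hqq2] at hm1
    show Dop E N t ξ (q (N - (j+1))) (q (N - j)) (chain E N t ξ q j X) =ᵐ[P]
      Dop E N t ξ (q' (N - (j+1))) (q' (N - j)) (chain E N t ξ q' j X')
    rw [hqq1, hqq2]
    exact Dop_congr E S h0 hab hbT hm1 h21 hm2 h22 ihe

theorem chain_degen (E : FEvaluation P T F) (S : StepSetup P T F N t ξ) {q : ℕ → ℝ}
    (hq : Monotone q) (hq0 : 0 ≤ q 0) (hqN : q N ≤ T) {X : Ω → ℝ}
    (hXm : AEStronglyMeasurable[F (q N)] X P) (hX2 : MemLp X 2 P) {k : ℕ} :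
    ∀ j, k ≤ j → j ≤ N → q (N - j) = q (N - k) →
      chain E N t ξ q j X =ᵐ[P] chain E N t ξ q k X := by
  intro j hkj hjN heq
  induction j, hkj using Nat.le_induction with
  | base => exact Filter.EventuallyEq.rfl
  | succ j hkj ih =>
    have hjN' : j ≤ N := by omega
    have h1 : q (N - (j + 1)) ≤ q (N - j) := hq (by omega)
    have h2 : q (N - j) ≤ q (N - k) := hq (by omega)
    have heq2 : q (N - j) = q (N - k) := le_antisymm h2 (heq ▸ h1)
    have hcc : q (N - (j + 1)) = q (N - j) := by rw [heq, heq2]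
    have hm := (chain_props E S hq hq0 hqN hXm hX2 j hjN').1
    have h2' := (chain_props E S hq hq0 hqN hXm hX2 j hjN').2
    have h0 : 0 ≤ q (N - j) := hq0.trans (hq (Nat.zero_le _))
    have hT : q (N - j) ≤ T := (hq (by omega : N - j ≤ N)).trans hqN
    show Dop E N t ξ (q (N - (j+1))) (q (N - j)) (chain E N t ξ q j X) =ᵐ[P] _
    rw [hcc]
    exact (Dop_self E S h0 hT hm h2').trans (ih hjN' heq2)

theorem chain_mono (E : FEvaluation P T F) (S : StepSetup P T F N t ξ) {q : ℕ → ℝ}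
    (hq : Monotone q) (hq0 : 0 ≤ q 0) (hqN : q N ≤ T) {X Y : Ω → ℝ}
    (hXm : AEStronglyMeasurable[F (q N)] X P) (hX2 : MemLp X 2 P)
    (hYm : AEStronglyMeasurable[F (q N)] Y P) (hY2 : MemLp Y 2 P)
    (h : ∀ᵐ ω ∂P, Y ω ≤ X ω) :
    ∀ k, k ≤ N → ∀ᵐ ω ∂P, chain E N t ξ q k Y ω ≤ chain E N t ξ q k X ω := by
  intro k
  induction k with
  | zero => intro _; exact h
  | succ k ih =>
    intro hk
    have h0 : 0 ≤ q (N - (k + 1)) := hq0.trans (hq (Nat.zero_le _))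
    have hab : q (N - (k + 1)) ≤ q (N - k) := hq (by omega)
    have hbT : q (N - k) ≤ T := (hq (by omega : N - k ≤ N)).trans hqN
    exact Dop_mono E S h0 hab hbT
      (chain_props E S hq hq0 hqN hXm hX2 k (by omega)).1
      (chain_props E S hq hq0 hqN hXm hX2 k (by omega)).2
      (chain_props E S hq hq0 hqN hYm hY2 k (by omega)).1
      (chain_props E S hq hq0 hqN hYm hY2 k (by omega)).2
      (ih (by omega))

theorem aesm'_indicator {m : MeasurableSpace Ω} {f : Ω → ℝ}
    (hf : AEStronglyMeasurable[m] f P) {A : Set Ω} (hA : MeasurableSet[m] A) :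
    AEStronglyMeasurable[m] (A.indicator f) P := by
  obtain ⟨g, hg, hfg⟩ := hf
  refine ⟨A.indicator g, hg.indicator hA, hfg.mono fun ω h => ?_⟩
  by_cases hω : ω ∈ A
  · simp [Set.indicator_of_mem hω, h]
  · simp [Set.indicator_of_notMem hω]

theorem chain_zero_one (E : FEvaluation P T F) (S : StepSetup P T F N t ξ) {q : ℕ → ℝ}
    (hq : Monotone q) (hq0 : 0 ≤ q 0) (hqN : q N ≤ T) {s : ℝ} (h0s : 0 ≤ s) (hs : s ≤ q 0)
    {A : Set Ω} (hA : MeasurableSet[F s] A) {X : Ω → ℝ}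
    (hXm : AEStronglyMeasurable[F (q N)] X P) (hX2 : MemLp X 2 P) :
    ∀ k, k ≤ N → ∀ᵐ ω ∂P, ω ∈ A →
      chain E N t ξ q k X ω = chain E N t ξ q k (A.indicator X) ω := by
  have hXim : AEStronglyMeasurable[F (q N)] (A.indicator X) P :=
    aesm'_indicator hXm (F.mono (hs.trans (hq (Nat.zero_le N))) A hA)
  have hXi2 : MemLp (A.indicator X) 2 P := hX2.indicator (F.le s A hA)
  intro k
  induction k with
  | zero =>
    intro _
    filter_upwards with ω hω
    exact (Set.indicator_of_mem hω X).symm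
  | succ k ih =>
    intro hk
    have ihk := ih (by omega)
    have h0 : 0 ≤ q (N - (k + 1)) := hq0.trans (hq (Nat.zero_le _))
    have hab : q (N - (k + 1)) ≤ q (N - k) := hq (by omega)
    have hbT : q (N - k) ≤ T := (hq (by omega : N - k ≤ N)).trans hqN
    set a := q (N - (k + 1)) with ha
    set b := q (N - k) with hb
    have hAa : MeasurableSet[F a] A := F.mono (hs.trans (hq (Nat.zero_le _))) A hA
    have hAb : MeasurableSet[F b] A := F.mono (hs.trans (hq (Nat.zero_le _))) A hA
    obtain ⟨hG1m, hG12⟩ := chain_props E S hq hq0 hqN hXm hX2 k (by omega)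
    obtain ⟨hG2m, hG22⟩ := chain_props E S hq hq0 hqN hXim hXi2 k (by omega)
    obtain ⟨hg1m, hg12⟩ := inner_props S h0 hab hbT hG1m hG12
    obtain ⟨hg2m, hg22⟩ := inner_props S h0 hab hbT hG2m hG22
    have z1 := E.zero_one a b _ A h0 hab hbT hg1m hg12 hAa
    have z2 := E.zero_one a b _ A h0 hab hbT hg2m hg22 hAa
    have e12 : A.indicator (fun ω => chain E N t ξ q k X ω + stepProcess N t ξ b ω
          - stepProcess N t ξ a ω)
        =ᵐ[P] A.indicator (fun ω => chain E N t ξ q k (A.indicator X) ω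
          + stepProcess N t ξ b ω - stepProcess N t ξ a ω) := by
      filter_upwards [ihk] with ω hω
      by_cases hωA : ω ∈ A
      · rw [Set.indicator_of_mem hωA, Set.indicator_of_mem hωA, hω hωA]
      · rw [Set.indicator_of_notMem hωA, Set.indicator_of_notMem hωA]
    have c12 := E.evalCongr h0 hab hbT (aesm'_indicator hg1m hAb) (hg12.indicator (F.le b A hAb))
      (aesm'_indicator hg2m hAb) (hg22.indicator (F.le b A hAb)) e12
    filter_upwards [z1, z2, c12] with ω h1 h2 h3 hω
    show Dop E N t ξ a b (chain E N t ξ q k X) ω = Dop E N t ξ a b (chain E N t ξ q k (A.indicator X)) ω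
    unfold Dop
    rw [h1 hω, h3, ← h2 hω]

end Aux3

section Aux4

variable {Ω : Type*} [m0 : MeasurableSpace Ω] {P : Measure Ω} {T : ℝ} {F : Filtration ℝ m0}
  {N : ℕ} {t : Fin (N + 1) → ℝ} {ξ : Fin N → Ω → ℝ}

set_option linter.unusedSectionVars false

/-- The partition points of `[s,u]` induced by the partition `t`. -/
noncomputable def pfun (N : ℕ) (t : Fin (N + 1) → ℝ) (s u : ℝ) (n : ℕ) : ℝ :=
  max s (min u (tau N t n))

theorem pfun_mono (hmono : StrictMono t) (s u : ℝ) : Monotone (pfun N t s u) :=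
  fun n m h => max_le_max le_rfl (min_le_min le_rfl (tau_mono hmono h))

theorem pfun_zero (ht0 : t 0 = 0) {s u : ℝ} (h0s : 0 ≤ s) (hsu : s ≤ u) :
    pfun N t s u 0 = s := by
  rw [pfun, tau_zero ht0, min_eq_right (h0s.trans hsu), max_eq_left h0s]

theorem pfun_N (htN : t (Fin.last N) = T) {s u : ℝ} (hsu : s ≤ u) (huT : u ≤ T) :
    pfun N t s u N = u := by
  rw [pfun, tau_ge htN le_rfl, min_eq_left huT, max_eq_right hsu]

theorem pfun_ge (s u : ℝ) (n : ℕ) : s ≤ pfun N t s u n := le_max_left _ _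

theorem pfun_le {s u : ℝ} (hsu : s ≤ u) (n : ℕ) : pfun N t s u n ≤ u :=
  max_le hsu (min_le_left _ _)

/-- The shifted evaluation `𝓔[·;K]`. -/
noncomputable def shiftEval (E : FEvaluation P T F) (N : ℕ) (t : Fin (N + 1) → ℝ)
    (ξ : Fin N → Ω → ℝ) (s u : ℝ) (X : Ω → ℝ) : Ω → ℝ :=
  chain E N t ξ (pfun N t s u) N X

theorem shiftEval_props (E : FEvaluation P T F) (S : StepSetup P T F N t ξ) {s u : ℝ}
    (h0s : 0 ≤ s) (hsu : s ≤ u) (huT : u ≤ T) {X : Ω → ℝ}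
    (hXm : AEStronglyMeasurable[F u] X P) (hX2 : MemLp X 2 P) :
    AEStronglyMeasurable[F s] (shiftEval E N t ξ s u X) P ∧
      MemLp (shiftEval E N t ξ s u X) 2 P := by
  have hXm' : AEStronglyMeasurable[F (pfun N t s u N)] X P := by
    rw [pfun_N S.htN hsu huT]; exact hXm
  have h := chain_props E S (pfun_mono S.hmono s u)
    (by rw [pfun_zero S.ht0 h0s hsu]; exact h0s)
    (by rw [pfun_N S.htN hsu huT]; exact huT) hXm' hX2 N le_rfl
  rwa [Nat.sub_self, pfun_zero S.ht0 h0s hsu] at h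

/-- Key computation: on a single cell the shifted evaluation is a one-cell shift. -/
theorem shiftEval_cell (E : FEvaluation P T F) (S : StepSetup P T F N t ξ) (i : Fin N)
    {s u : ℝ} (h1 : t i.castSucc ≤ s) (hsu : s ≤ u) (h2 : u ≤ t i.succ) {X : Ω → ℝ}
    (hXm : AEStronglyMeasurable[F u] X P) (hX2 : MemLp X 2 P) :
    shiftEval E N t ξ s u X =ᵐ[P] Dop E N t ξ s u X := by
  have h0s : 0 ≤ s := le_trans (by rw [← S.ht0]; exact S.hmono.monotone (Fin.zero_le _)) h1
  have huT : u ≤ T := le_trans h2 (by rw [← S.htN]; exact S.hmono.monotone (Fin.le_last _))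
  have hiN : (i : ℕ) < N := i.isLt
  have htauc : tau N t i = t i.castSucc := by
    rw [tau_eq t (le_of_lt hiN)]; exact congrArg t (Fin.ext rfl)
  have htaus : tau N t ((i : ℕ) + 1) = t i.succ := by
    rw [tau_eq t hiN]; exact congrArg t (Fin.ext rfl)
  have hp_hi : ∀ n, (i : ℕ) + 1 ≤ n → pfun N t s u n = u := by
    intro n hn
    have : u ≤ tau N t n := h2.trans (htaus ▸ tau_mono S.hmono hn)
    rw [pfun, min_eq_left this, max_eq_right hsu]
  have hp_lo : ∀ n, n ≤ (i : ℕ) → pfun N t s u n = s := by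
    intro n hn
    have : tau N t n ≤ s := le_trans (htauc ▸ tau_mono S.hmono hn) h1
    rw [pfun, min_eq_right (this.trans hsu), max_eq_left this]
  have hq := pfun_mono (t := t) S.hmono s u
  have hq0 : 0 ≤ pfun N t s u 0 := by rw [pfun_zero S.ht0 h0s hsu]; exact h0s
  have hqN : pfun N t s u N ≤ T := by rw [pfun_N S.htN hsu huT]; exact huT
  have hXm' : AEStronglyMeasurable[F (pfun N t s u N)] X P := by
    rw [pfun_N S.htN hsu huT]; exact hXm
  set k₁ := N - 1 - (i : ℕ) with hk₁
  have e1 : N - k₁ = (i : ℕ) + 1 := by omega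
  have e2 : N - (k₁ + 1) = (i : ℕ) := by omega
  have st1 : chain E N t ξ (pfun N t s u) k₁ X =ᵐ[P] X := by
    have := chain_degen E S hq hq0 hqN hXm' hX2 (k := 0) k₁ (Nat.zero_le _) (by omega)
      (by rw [e1, Nat.sub_zero, hp_hi _ le_rfl, pfun_N S.htN hsu huT])
    exact this
  have st2 : chain E N t ξ (pfun N t s u) (k₁ + 1) X =ᵐ[P] Dop E N t ξ s u X := by
    show Dop E N t ξ (pfun N t s u (N - (k₁ + 1))) (pfun N t s u (N - k₁))
      (chain E N t ξ (pfun N t s u) k₁ X) =ᵐ[P] _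
    rw [e1, e2, hp_lo _ le_rfl, hp_hi _ le_rfl]
    refine Dop_congr E S h0s hsu huT ?_ ?_ hXm hX2 st1
    · have := (chain_props E S hq hq0 hqN hXm' hX2 k₁ (by omega)).1
      rwa [e1, hp_hi _ le_rfl] at this
    · exact (chain_props E S hq hq0 hqN hXm' hX2 k₁ (by omega)).2
  have st3 : chain E N t ξ (pfun N t s u) N X =ᵐ[P]
      chain E N t ξ (pfun N t s u) (k₁ + 1) X := by
    refine chain_degen E S hq hq0 hqN hXm' hX2 (k := k₁ + 1) N (by omega) le_rfl ?_
    rw [Nat.sub_self, e2, pfun_zero S.ht0 h0s hsu, hp_lo _ le_rfl]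
  exact st3.trans st2

theorem shiftEval_shiftProperty (E : FEvaluation P T F) (S : StepSetup P T F N t ξ)
    (E' : FEvaluation P T F) (hE' : E'.eval = shiftEval E N t ξ) :
    ShiftProperty E E' N t ξ := by
  intro i s u h1 hsu h2 X hXm hX2
  rw [hE']
  exact shiftEval_cell E S i h1 hsu h2 hXm hX2

/-- Any `F`-evaluation with the shift property agrees a.e. with `shiftEval`. -/
theorem eval_eq_shiftEval (E : FEvaluation P T F) (S : StepSetup P T F N t ξ)
    (E'' : FEvaluation P T F) (hsp : ShiftProperty E E'' N t ξ) {s u : ℝ}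
    (h0s : 0 ≤ s) (hsu : s ≤ u) (huT : u ≤ T) {X : Ω → ℝ}
    (hXm : AEStronglyMeasurable[F u] X P) (hX2 : MemLp X 2 P) :
    E''.eval s u X =ᵐ[P] shiftEval E N t ξ s u X := by
  have hq := pfun_mono (t := t) S.hmono s u
  have hp0 : pfun N t s u 0 = s := pfun_zero S.ht0 h0s hsu
  have hpN : pfun N t s u N = u := pfun_N S.htN hsu huT
  have hq0 : 0 ≤ pfun N t s u 0 := by rw [hp0]; exact h0s
  have hqN : pfun N t s u N ≤ T := by rw [hpN]; exact huT
  have hXm' : AEStronglyMeasurable[F (pfun N t s u N)] X P := by rw [hpN]; exact hXm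
  have key : ∀ k, k ≤ N → E''.eval s u X =ᵐ[P]
      E''.eval s (pfun N t s u (N - k)) (chain E N t ξ (pfun N t s u) k X) := by
    intro k
    induction k with
    | zero =>
      intro _
      rw [Nat.sub_zero, hpN]
      exact Filter.EventuallyEq.rfl
    | succ k ih =>
      intro hk
      have hsa : s ≤ pfun N t s u (N - (k + 1)) := pfun_ge s u _
      have hab : pfun N t s u (N - (k + 1)) ≤ pfun N t s u (N - k) := hq (by omega)
      have hbu : pfun N t s u (N - k) ≤ u := pfun_le hsu _
      have hbT : pfun N t s u (N - k) ≤ T := hbu.trans huT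
      have h0a : 0 ≤ pfun N t s u (N - (k + 1)) := h0s.trans hsa
      obtain ⟨hWm, hW2⟩ := chain_props E S hq hq0 hqN hXm' hX2 k (by omega)
      have middle : E''.eval (pfun N t s u (N - (k + 1))) (pfun N t s u (N - k))
          (chain E N t ξ (pfun N t s u) k X) =ᵐ[P]
          Dop E N t ξ (pfun N t s u (N - (k + 1))) (pfun N t s u (N - k))
          (chain E N t ξ (pfun N t s u) k X) := by
        rcases eq_or_lt_of_le hab with he | hlt
        · rw [← he] at hWm ⊢
          have haT : pfun N t s u (N - (k + 1)) ≤ T := he.le.trans hbT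
          exact (E''.eval_self _ _ h0a haT hWm hW2).trans
            (Dop_self E S h0a haT hWm hW2).symm
        · have hnN : N - k - 1 < N := by omega
          have hnkk : N - (k + 1) = N - k - 1 := by omega
          have hsltb : s < pfun N t s u (N - k) := lt_of_le_of_lt hsa hlt
          have hsmin : s ≤ min u (tau N t (N - k)) := by
            by_contra hcon
            push_neg at hcon
            have hbs : pfun N t s u (N - k) = s := by rw [pfun, max_eq_left hcon.le]
            linarith
          have hbval : pfun N t s u (N - k) = min u (tau N t (N - k)) := by
            rw [pfun, max_eq_right hsmin]
          have hble : pfun N t s u (N - k) ≤ tau N t (N - k) :=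
            hbval ▸ min_le_right _ _
          have htle : tau N t (N - k - 1) ≤ pfun N t s u (N - (k + 1)) := by
            rcases le_total (tau N t (N - k - 1)) s with hts | hts
            · exact hts.trans hsa
            · have htu : tau N t (N - k - 1) ≤ u := by
                by_contra hcon
                push_neg at hcon
                have hau : pfun N t s u (N - (k + 1)) = u := by
                  rw [hnkk, pfun, min_eq_left hcon.le, max_eq_right hsu]
                have := hbu
                linarith
              have hav : pfun N t s u (N - (k + 1)) = tau N t (N - k - 1) := by
                rw [hnkk, pfun, min_eq_right htu, max_eq_right hts]
              exact hav.ge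
          have hc1 : t (⟨N - k - 1, hnN⟩ : Fin N).castSucc ≤ pfun N t s u (N - (k + 1)) := by
            refine le_trans (le_of_eq ?_) htle
            rw [tau_eq t (by omega : N - k - 1 ≤ N)]
            exact congrArg t (Fin.ext rfl)
          have hc2 : pfun N t s u (N - k) ≤ t (⟨N - k - 1, hnN⟩ : Fin N).succ := by
            refine le_trans hble (le_of_eq ?_)
            rw [tau_eq t (by omega : N - k ≤ N)]
            exact congrArg t (Fin.ext (by simp; omega))
          exact hsp ⟨N - k - 1, hnN⟩ _ _ hc1 hab hc2 _ hWm hW2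
      have hDm := Dop_meas E S h0a hab hbT hWm hW2
      have hD2 := Dop_memL2 E S h0a hab hbT hWm hW2
      have hEm := E''.measurable_eval _ _ _ h0a hab hbT hWm hW2
      have hE2 := E''.memL2_eval _ _ _ h0a hab hbT hWm hW2
      have step : E''.eval s u X =ᵐ[P] E''.eval s (pfun N t s u (N - (k + 1)))
          (Dop E N t ξ (pfun N t s u (N - (k + 1))) (pfun N t s u (N - k))
            (chain E N t ξ (pfun N t s u) k X)) := by
        refine ((ih (by omega)).trans
          (E''.consistent s _ _ _ h0s hsa hab hbT hWm hW2).symm).trans ?_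
        exact E''.evalCongr h0s hsa (hab.trans hbT) hEm hE2 hDm hD2 middle
      exact step
  have fin := key N le_rfl
  rw [Nat.sub_self, hp0] at fin
  obtain ⟨hCm, hC2⟩ := chain_props E S hq hq0 hqN hXm' hX2 N le_rfl
  rw [Nat.sub_self, hp0] at hCm
  exact fin.trans (E''.eval_self s _ h0s (hsu.trans huT) hCm hC2)

end Aux4

section Aux5

variable {Ω : Type*} [m0 : MeasurableSpace Ω] {P : Measure Ω} {T : ℝ} {F : Filtration ℝ m0}
  {N : ℕ} {t : Fin (N + 1) → ℝ} {ξ : Fin N → Ω → ℝ}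

set_option linter.unusedSectionVars false

theorem shiftEval_self (E : FEvaluation P T F) (S : StepSetup P T F N t ξ) {u : ℝ}
    (h0u : 0 ≤ u) (huT : u ≤ T) {X : Ω → ℝ} (hXm : AEStronglyMeasurable[F u] X P)
    (hX2 : MemLp X 2 P) : shiftEval E N t ξ u u X =ᵐ[P] X := by
  have hq := pfun_mono (t := t) S.hmono u u
  have hp0 : pfun N t u u 0 = u := pfun_zero S.ht0 h0u le_rfl
  have hpN : pfun N t u u N = u := pfun_N S.htN le_rfl huT
  have hXm' : AEStronglyMeasurable[F (pfun N t u u N)] X P := by rw [hpN]; exact hXm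
  exact chain_degen E S hq (by rw [hp0]; exact h0u) (by rw [hpN]; exact huT) hXm' hX2
    (k := 0) N (Nat.zero_le _) le_rfl (by rw [Nat.sub_self, Nat.sub_zero, hp0, hpN])

theorem shiftEval_congr (E : FEvaluation P T F) (S : StepSetup P T F N t ξ) {s u : ℝ}
    (h0s : 0 ≤ s) (hsu : s ≤ u) (huT : u ≤ T) {X Y : Ω → ℝ}
    (hXm : AEStronglyMeasurable[F u] X P) (hX2 : MemLp X 2 P)
    (hYm : AEStronglyMeasurable[F u] Y P) (hY2 : MemLp Y 2 P) (h : X =ᵐ[P] Y) :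
    shiftEval E N t ξ s u X =ᵐ[P] shiftEval E N t ξ s u Y := by
  have hq := pfun_mono (t := t) S.hmono s u
  have hp0 : pfun N t s u 0 = s := pfun_zero S.ht0 h0s hsu
  have hpN : pfun N t s u N = u := pfun_N S.htN hsu huT
  have hXm' : AEStronglyMeasurable[F (pfun N t s u N)] X P := by rw [hpN]; exact hXm
  have hYm' : AEStronglyMeasurable[F (pfun N t s u N)] Y P := by rw [hpN]; exact hYm
  exact chain_congr E S hq (by rw [hp0]; exact h0s) (by rw [hpN]; exact huT)
    hq (by rw [hp0]; exact h0s) (by rw [hpN]; exact huT) hXm' hX2 hYm' hY2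
    (k := 0) N (Nat.zero_le _) le_rfl (fun _ _ _ => rfl) h

theorem shiftEval_consistent (E : FEvaluation P T F) (S : StepSetup P T F N t ξ)
    {r s u : ℝ} (h0r : 0 ≤ r) (hrs : r ≤ s) (hsu : s ≤ u) (huT : u ≤ T) {X : Ω → ℝ}
    (hXm : AEStronglyMeasurable[F u] X P) (hX2 : MemLp X 2 P) :
    shiftEval E N t ξ r s (shiftEval E N t ξ s u X) =ᵐ[P] shiftEval E N t ξ r u X := by
  classical
  have h0s : 0 ≤ s := h0r.trans hrs
  have h0u : 0 ≤ u := h0s.trans hsu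
  have hsT : s ≤ T := hsu.trans huT
  have hrT : r ≤ T := hrs.trans hsT
  have hru : r ≤ u := hrs.trans hsu
  have hqb := pfun_mono (t := t) S.hmono s u
  have hqa := pfun_mono (t := t) S.hmono r s
  have hqq := pfun_mono (t := t) S.hmono r u
  have hb0 : pfun N t s u 0 = s := pfun_zero S.ht0 h0s hsu
  have hbN : pfun N t s u N = u := pfun_N S.htN hsu huT
  have ha0 : pfun N t r s 0 = r := pfun_zero S.ht0 h0r hrs
  have haN : pfun N t r s N = s := pfun_N S.htN hrs hsT
  have hc0 : pfun N t r u 0 = r := pfun_zero S.ht0 h0r hru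
  have hcN : pfun N t r u N = u := pfun_N S.htN hru huT
  have hb0' : 0 ≤ pfun N t s u 0 := by rw [hb0]; exact h0s
  have hbN' : pfun N t s u N ≤ T := by rw [hbN]; exact huT
  have ha0' : 0 ≤ pfun N t r s 0 := by rw [ha0]; exact h0r
  have haN' : pfun N t r s N ≤ T := by rw [haN]; exact hsT
  have hc0' : 0 ≤ pfun N t r u 0 := by rw [hc0]; exact h0r
  have hcN' : pfun N t r u N ≤ T := by rw [hcN]; exact huT
  have hXmb : AEStronglyMeasurable[F (pfun N t s u N)] X P := by rw [hbN]; exact hXm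
  have hXmq : AEStronglyMeasurable[F (pfun N t r u N)] X P := by rw [hcN]; exact hXm
  by_cases hTs : tau N t N ≤ s
  · have hus : u = s := le_antisymm (huT.trans (by rwa [tau_ge S.htN le_rfl] at hTs)) hsu
    subst hus
    have hss := shiftEval_self E S h0s huT hXm hX2
    obtain ⟨hsem, hse2⟩ := shiftEval_props E S h0s le_rfl huT hXm hX2
    exact shiftEval_congr E S h0r hrs hsT hsem hse2 hXm hX2 hss
  · -- main case
    have hP0 : tau N t 0 ≤ s := by rw [tau_zero S.ht0]; exact h0s
    set n₀ := Nat.findGreatest (fun n => tau N t n ≤ s) N with hn₀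
    have hn₀N : n₀ ≤ N := Nat.findGreatest_le N
    have hτn₀ : tau N t n₀ ≤ s := by
      have := Nat.findGreatest_spec (P := fun n => tau N t n ≤ s) (Nat.zero_le N) hP0
      rwa [← hn₀] at this
    have hlt : n₀ < N := by
      rcases lt_or_eq_of_le hn₀N with h | h
      · exact h
      · exact absurd (by rwa [h] at hτn₀) hTs
    have factA : ∀ n, n₀ + 1 ≤ n → s ≤ tau N t n := by
      intro n h
      rcases le_or_gt n N with h' | h'
      · have : ¬ tau N t n ≤ s := Nat.findGreatest_is_greatest
          (P := fun n => tau N t n ≤ s) (by rw [← hn₀]; omega) h'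
        exact (lt_of_not_ge this).le
      · rw [tau_ge S.htN h'.le]; exact hsT
    have factB : ∀ n, n ≤ n₀ → tau N t n ≤ s := fun n h => (tau_mono S.hmono h).trans hτn₀
    have hbq : ∀ n, n₀ + 1 ≤ n → pfun N t s u n = pfun N t r u n := by
      intro n h
      rw [pfun, pfun, max_eq_right (le_min hsu (factA n h)),
        max_eq_right (hrs.trans (le_min hsu (factA n h)))]
    have ha_hi : ∀ n, n₀ + 1 ≤ n → pfun N t r s n = s := by
      intro n h
      rw [pfun, min_eq_left (factA n h), max_eq_right hrs]
    have haq : ∀ n, n ≤ n₀ → pfun N t r s n = pfun N t r u n := by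
      intro n h
      rw [pfun, pfun, min_eq_right (factB n h), min_eq_right ((factB n h).trans hsu)]
    have hb_lo : ∀ n, n ≤ n₀ → pfun N t s u n = s := by
      intro n h
      rw [pfun, min_eq_right ((factB n h).trans hsu), max_eq_left (factB n h)]
    set k₁ := N - 1 - n₀ with hk₁
    have e1 : N - k₁ = n₀ + 1 := by omega
    have e2 : N - (k₁ + 1) = n₀ := by omega
    have hsq1 : s ≤ pfun N t r u (n₀ + 1) := by
      rw [← hbq (n₀ + 1) le_rfl]; exact pfun_ge s u _
    have hq1T : pfun N t r u (n₀ + 1) ≤ T := (pfun_le hru _).trans huT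
    have hq1tau : pfun N t r u (n₀ + 1) ≤ tau N t (n₀ + 1) := by
      rw [pfun, max_eq_right (hrs.trans (le_min hsu (factA _ le_rfl)))]
      exact min_le_right _ _
    have hq0tau : tau N t n₀ ≤ pfun N t r u n₀ := by
      rw [pfun, min_eq_right ((factB n₀ le_rfl).trans hsu)]
      exact le_max_right _ _
    have hq0s : pfun N t r u n₀ ≤ s := by
      rw [pfun, min_eq_right ((factB n₀ le_rfl).trans hsu)]
      exact max_le hrs (factB n₀ le_rfl)
    -- measurability of the `q`-chain at stage `k₁`
    obtain ⟨hYm0, hY2⟩ := chain_props E S hqq hc0' hcN' hXmq hX2 k₁ (by omega)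
    have hYm : AEStronglyMeasurable[F (pfun N t r u (n₀ + 1))]
        (chain E N t ξ (pfun N t r u) k₁ X) P := by rwa [e1] at hYm0
    have st1 : chain E N t ξ (pfun N t s u) k₁ X =ᵐ[P]
        chain E N t ξ (pfun N t r u) k₁ X :=
      chain_congr E S hqb hb0' hbN' hqq hc0' hcN' hXmb hX2 hXmq hX2 (k := 0) k₁
        (Nat.zero_le _) (by omega) (fun n h1 _ => hbq n (by omega)) Filter.EventuallyEq.rfl
    have st2 : chain E N t ξ (pfun N t s u) (k₁ + 1) X =ᵐ[P]
        Dop E N t ξ s (pfun N t r u (n₀ + 1)) (chain E N t ξ (pfun N t r u) k₁ X) := by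
      show Dop E N t ξ (pfun N t s u (N - (k₁ + 1))) (pfun N t s u (N - k₁))
        (chain E N t ξ (pfun N t s u) k₁ X) =ᵐ[P] _
      rw [e1, e2, hb_lo n₀ le_rfl, hbq (n₀ + 1) le_rfl]
      refine Dop_congr E S h0s hsq1 hq1T ?_ ?_ hYm hY2 st1
      · have := (chain_props E S hqb hb0' hbN' hXmb hX2 k₁ (by omega)).1
        rwa [e1, hbq (n₀ + 1) le_rfl] at this
      · exact (chain_props E S hqb hb0' hbN' hXmb hX2 k₁ (by omega)).2
    have st3 : chain E N t ξ (pfun N t s u) N X =ᵐ[P]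
        chain E N t ξ (pfun N t s u) (k₁ + 1) X :=
      chain_degen E S hqb hb0' hbN' hXmb hX2 (k := k₁ + 1) N (by omega) le_rfl
        (by rw [Nat.sub_self, e2, hb0, hb_lo n₀ le_rfl])
    have hZm : AEStronglyMeasurable[F s]
        (Dop E N t ξ s (pfun N t r u (n₀ + 1)) (chain E N t ξ (pfun N t r u) k₁ X)) P :=
      Dop_meas E S h0s hsq1 hq1T hYm hY2
    have hZ2 : MemLp
        (Dop E N t ξ s (pfun N t r u (n₀ + 1)) (chain E N t ξ (pfun N t r u) k₁ X)) 2 P :=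
      Dop_memL2 E S h0s hsq1 hq1T hYm hY2
    have hZm' : AEStronglyMeasurable[F (pfun N t r s N)]
        (Dop E N t ξ s (pfun N t r u (n₀ + 1)) (chain E N t ξ (pfun N t r u) k₁ X)) P := by
      rw [haN]; exact hZm
    have hCm : AEStronglyMeasurable[F (pfun N t r s N)]
        (chain E N t ξ (pfun N t s u) N X) P := by
      have := (chain_props E S hqb hb0' hbN' hXmb hX2 N le_rfl).1
      rw [Nat.sub_self, hb0] at this
      rw [haN]; exact this
    have hC2 : MemLp (chain E N t ξ (pfun N t s u) N X) 2 P :=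
      (chain_props E S hqb hb0' hbN' hXmb hX2 N le_rfl).2
    have st4 : chain E N t ξ (pfun N t r s) N (chain E N t ξ (pfun N t s u) N X) =ᵐ[P]
        chain E N t ξ (pfun N t r s) N
          (Dop E N t ξ s (pfun N t r u (n₀ + 1)) (chain E N t ξ (pfun N t r u) k₁ X)) :=
      chain_congr E S hqa ha0' haN' hqa ha0' haN' hCm hC2 hZm' hZ2 (k := 0) N
        (Nat.zero_le _) le_rfl (fun _ _ _ => rfl) (st3.trans st2)
    have st5 : chain E N t ξ (pfun N t r s) k₁
        (Dop E N t ξ s (pfun N t r u (n₀ + 1)) (chain E N t ξ (pfun N t r u) k₁ X)) =ᵐ[P]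
        Dop E N t ξ s (pfun N t r u (n₀ + 1)) (chain E N t ξ (pfun N t r u) k₁ X) :=
      chain_degen E S hqa ha0' haN' hZm' hZ2 (k := 0) k₁ (Nat.zero_le _) (by omega)
        (by rw [Nat.sub_zero, e1, ha_hi (n₀ + 1) le_rfl, haN])
    have hcell1 : t (⟨n₀, hlt⟩ : Fin N).castSucc ≤ pfun N t r u n₀ := by
      refine le_trans (le_of_eq ?_) hq0tau
      rw [tau_eq t (by omega : n₀ ≤ N)]
      exact congrArg t (Fin.ext rfl)
    have hcell2 : pfun N t r u (n₀ + 1) ≤ t (⟨n₀, hlt⟩ : Fin N).succ := by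
      refine le_trans hq1tau (le_of_eq ?_)
      rw [tau_eq t (by omega : n₀ + 1 ≤ N)]
      exact congrArg t (Fin.ext rfl)
    have st6 : chain E N t ξ (pfun N t r s) (k₁ + 1)
        (Dop E N t ξ s (pfun N t r u (n₀ + 1)) (chain E N t ξ (pfun N t r u) k₁ X)) =ᵐ[P]
        Dop E N t ξ (pfun N t r u n₀) (pfun N t r u (n₀ + 1))
          (chain E N t ξ (pfun N t r u) k₁ X) := by
      show Dop E N t ξ (pfun N t r s (N - (k₁ + 1))) (pfun N t r s (N - k₁)) _ =ᵐ[P] _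
      rw [e1, e2, haq n₀ le_rfl, ha_hi (n₀ + 1) le_rfl]
      have hq0r : 0 ≤ pfun N t r u n₀ := h0r.trans (pfun_ge r u _)
      have hch_m : AEStronglyMeasurable[F s] (chain E N t ξ (pfun N t r s) k₁
          (Dop E N t ξ s (pfun N t r u (n₀ + 1)) (chain E N t ξ (pfun N t r u) k₁ X))) P := by
        have := (chain_props E S hqa ha0' haN' hZm' hZ2 k₁ (by omega)).1
        rwa [e1, ha_hi (n₀ + 1) le_rfl] at this
      have hch_2 := (chain_props E S hqa ha0' haN' hZm' hZ2 k₁ (by omega)).2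
      refine (Dop_congr E S hq0r hq0s hsT hch_m hch_2 hZm hZ2 st5).trans ?_
      exact Dop_cell E S ⟨n₀, hlt⟩ hcell1 hq0s hsq1 hcell2 hYm hY2
    have ebase : chain E N t ξ (pfun N t r u) (k₁ + 1) X =
        Dop E N t ξ (pfun N t r u n₀) (pfun N t r u (n₀ + 1))
          (chain E N t ξ (pfun N t r u) k₁ X) := by
      show Dop E N t ξ (pfun N t r u (N - (k₁ + 1))) (pfun N t r u (N - k₁)) _ = _
      rw [e1, e2]
    have base : chain E N t ξ (pfun N t r s) (k₁ + 1)
        (Dop E N t ξ s (pfun N t r u (n₀ + 1)) (chain E N t ξ (pfun N t r u) k₁ X)) =ᵐ[P]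
        chain E N t ξ (pfun N t r u) (k₁ + 1) X := by
      rw [ebase]; exact st6
    have st7 : chain E N t ξ (pfun N t r s) N
        (Dop E N t ξ s (pfun N t r u (n₀ + 1)) (chain E N t ξ (pfun N t r u) k₁ X)) =ᵐ[P]
        chain E N t ξ (pfun N t r u) N X :=
      chain_congr E S hqa ha0' haN' hqq hc0' hcN' hZm' hZ2 hXmq hX2 (k := k₁ + 1) N
        (by omega) le_rfl (fun n _ h2 => haq n (by omega)) base
    exact st4.trans st7

end Aux5
/-- **Proposition 3.5 of the paper.** Given an `F`-evaluation `𝓔` and a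
step process `K_s = Σ ξ_i 1_{[t_i,t_{i+1})}(s)` with `ξ_i ∈ L²(F_{t_i})`, there is an
`F`-evaluation `𝓔[·;K]`, unique up to almost-sure equality, satisfying
`𝓔_{s,t}[X;K] = 𝓔_{s,t}[X + K_t − K_s]` a.s. whenever `t_i ≤ s ≤ t ≤ t_{i+1}` and
`X ∈ L²(F_t)`. -/
theorem stmt_7 {Ω : Type*} [m0 : MeasurableSpace Ω] (P : Measure Ω) [IsProbabilityMeasure P]
    (T : ℝ) (hT : 0 < T) (F : Filtration ℝ m0) (E : FEvaluation P T F)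
    (N : ℕ) (hN : 0 < N) (t : Fin (N + 1) → ℝ) (hmono : StrictMono t)
    (ht0 : t 0 = 0) (htN : t (Fin.last N) = T)
    (ξ : Fin N → Ω → ℝ)
    (hξm : ∀ i : Fin N, AEStronglyMeasurable[F (t i.castSucc)] (ξ i) P)
    (hξ2 : ∀ i : Fin N, MemLp (ξ i) 2 P) :
    ∃ E' : FEvaluation P T F, ShiftProperty E E' N t ξ ∧
      ∀ E'' : FEvaluation P T F, ShiftProperty E E'' N t ξ →
        ∀ (s u : ℝ) (X : Ω → ℝ), 0 ≤ s → s ≤ u → u ≤ T →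
          AEStronglyMeasurable[F u] X P → MemLp X 2 P →
          E''.eval s u X =ᵐ[P] E'.eval s u X := by
  
  have S : StepSetup P T F N t ξ := ⟨hN, hmono, ht0, htN, hξm, hξ2⟩
  refine ⟨{ eval := shiftEval E N t ξ
            measurable_eval := fun s u X h0s hsu huT hXm hX2 =>
              (shiftEval_props E S h0s hsu huT hXm hX2).1
            memL2_eval := fun s u X h0s hsu huT hXm hX2 =>
              (shiftEval_props E S h0s hsu huT hXm hX2).2
            mono := fun s u X Y h0s hsu huT hXm hX2 hYm hY2 h => by
              have hq := pfun_mono (t := t) hmono s u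
              have hp0 : pfun N t s u 0 = s := pfun_zero ht0 h0s hsu
              have hpN : pfun N t s u N = u := pfun_N htN hsu huT
              have hXm' : AEStronglyMeasurable[F (pfun N t s u N)] X P := by
                rw [hpN]; exact hXm
              have hYm' : AEStronglyMeasurable[F (pfun N t s u N)] Y P := by
                rw [hpN]; exact hYm
              exact chain_mono E S hq (by rw [hp0]; exact h0s) (by rw [hpN]; exact huT)
                hXm' hX2 hYm' hY2 h N le_rfl
            eval_self := fun u X h0u huT hXm hX2 => shiftEval_self E S h0u huT hXm hX2
            consistent := fun r s u X h0r hrs hsu huT hXm hX2 =>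
              shiftEval_consistent E S h0r hrs hsu huT hXm hX2
            zero_one := fun s u X A h0s hsu huT hXm hX2 hA => by
              have hq := pfun_mono (t := t) hmono s u
              have hp0 : pfun N t s u 0 = s := pfun_zero ht0 h0s hsu
              have hpN : pfun N t s u N = u := pfun_N htN hsu huT
              have hXm' : AEStronglyMeasurable[F (pfun N t s u N)] X P := by
                rw [hpN]; exact hXm
              exact chain_zero_one E S hq (by rw [hp0]; exact h0s)
                (by rw [hpN]; exact huT) h0s (by rw [hp0]) hA hXm' hX2 N le_rfl },
    ?_, ?_⟩
  · exact shiftEval_shiftProperty E S _ rfl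
  · intro E'' hsp s u X h0s hsu huT hXm hX2
    exact eval_eq_shiftEval E S E'' hsp h0s hsu huT hXm hX2
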